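/- Let D be a finite directed acyclic graph and define, for vertices u,v, spread(u,v) = 0 if there is no pair of interiorly disjoint directed u-to-v paths, and otherwise the maximum, over pairs (p,q) of directed u-to-v paths sharing no interior vertices, of | length(p) − length(q) |. Let spread(D) = max over all pairs (u,v) of spread(u,v). Then for every N-free order P, the activity satisfies α(P) ≤ width(A(P)) · (spread(A(P)) + 2). -/

import Mathlib

/-- One-step reachability between vertices of a directed multigraph. -/
def vStep {V E : Type*} (src dst : E → V) (u v : V) : Prop :=
  ∃ e : E, src e = u ∧ dst e = v

/-- The line-digraph order on arcs: `x < y` iff some directed path has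
first arc `x` and last arc `y`. -/
def lineLT {V E : Type*} (src dst : E → V) (x y : E) : Prop :=
  Relation.TransGen (fun a b => dst a = src b) x y

/-- A directed path of length `m` (counting arcs) through the vertices
`p 0, p 1, …, p m`. -/
def IsDipath {V E : Type*} (src dst : E → V) (m : ℕ) (p : Fin (m + 1) → V) : Prop :=
  ∀ i : Fin m, ∃ e : E, src e = p i.castSucc ∧ dst e = p i.succ

/-- The active set after the first `i` elements of the listing `L` of the
arcs. -/
def activeSet {V E : Type*} {n : ℕ} (src dst : E → V) (L : E ≃ Fin n) (i : ℕ) :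
    Set V :=
  {v : V | ∃ a b : E, ((L a : ℕ) < i ∧ i ≤ (L b : ℕ)) ∧ dst a = v ∧ src b = v}

section
set_option linter.unusedSectionVars false
namespace Stmt11Aux

variable {V E : Type*} [Fintype V] [Fintype E] (src dst : E → V)

/-- ℕ-indexed walk of length m. -/
def NPath (m : ℕ) (p : ℕ → V) : Prop :=
  ∀ i < m, ∃ e : E, src e = p i ∧ dst e = p (i + 1)

variable {src dst}

lemma npath_transGen {m : ℕ} {p : ℕ → V} (h : NPath src dst m p) :
    ∀ {i j : ℕ}, i < j → j ≤ m → Relation.TransGen (vStep src dst) (p i) (p j) := by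
  intro i j
  induction j with
  | zero => omega
  | succ j ih =>
    intro hij hj
    rcases eq_or_lt_of_le (Nat.lt_succ_iff.mp hij) with h' | h'
    · subst h'
      exact Relation.TransGen.single ⟨(h i (by omega)).choose, (h i (by omega)).choose_spec⟩
    · exact (ih h' (by omega)).tail ⟨(h j (by omega)).choose, (h j (by omega)).choose_spec⟩

variable (hacyc : ∀ v : V, ¬ Relation.TransGen (vStep src dst) v v)
include hacyc

lemma npath_inj {m : ℕ} {p : ℕ → V} (h : NPath src dst m p) :
    ∀ {i j : ℕ}, i < j → j ≤ m → p i ≠ p j := by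
  intro i j hij hj heq
  have h2 := npath_transGen h hij hj
  rw [heq] at h2
  exact hacyc (p j) h2

lemma npath_lt_card {m : ℕ} {p : ℕ → V} (h : NPath src dst m p) :
    m < Fintype.card V := by
  have hinj : Function.Injective (fun i : Fin (m + 1) => p i) := by
    intro a b hab
    by_contra hne
    rcases Ne.lt_or_gt (fun hh : a = b => hne hh) with h' | h'
    · exact npath_inj hacyc h (show (a : ℕ) < b from h') (by omega) hab
    · exact npath_inj hacyc h (show (b : ℕ) < a from h') (by omega) hab.symm
  have := Fintype.card_le_of_injective _ hinj
  simpa using this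

omit hacyc

variable (src dst) in
/-- ends at v with length m -/
def EndsAt (v : V) (m : ℕ) : Prop :=
  ∃ p : ℕ → V, NPath src dst m p ∧ p m = v

variable (src dst) in
noncomputable def ell (v : V) : ℕ :=
  @Nat.findGreatest (EndsAt src dst v) (Classical.decPred _) (Fintype.card V)

lemma endsAt_zero (v : V) : EndsAt src dst v 0 :=
  ⟨fun _ => v, fun i hi => absurd hi (Nat.not_lt_zero i), rfl⟩

lemma ell_spec (v : V) : EndsAt src dst v (ell src dst v) := by
  classical
  exact Nat.findGreatest_spec (Nat.zero_le _) (endsAt_zero v)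

include hacyc

lemma le_ell {v : V} {m : ℕ} (h : EndsAt src dst v m) : m ≤ ell src dst v := by
  classical
  obtain ⟨p, hp, -⟩ := id h
  exact Nat.le_findGreatest (le_of_lt (npath_lt_card hacyc hp)) h

lemma ell_step (e : E) : ell src dst (src e) + 1 ≤ ell src dst (dst e) := by
  obtain ⟨p, hp, hpe⟩ := ell_spec (src := src) (dst := dst) (src e)
  set l := ell src dst (src e) with hl
  refine le_ell hacyc ⟨fun i => if i ≤ l then p i else dst e, ?_, by simp⟩
  intro i hi
  rcases lt_or_eq_of_le (Nat.lt_succ_iff.mp hi) with h' | h'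
  · obtain ⟨e', h1, h2⟩ := hp i h'
    exact ⟨e', by simp [h1, h2, Nat.le_of_lt h', Nat.succ_le_of_lt h']⟩
  · subst h'
    exact ⟨e, by simp [hpe]⟩

lemma ell_lt_of_transGen {u w : V} (h : Relation.TransGen (vStep src dst) u w) :
    ell src dst u < ell src dst w := by
  induction h with
  | single hstep =>
    obtain ⟨e, h1, h2⟩ := hstep
    have := ell_step hacyc e
    subst h1 h2
    omega
  | tail _ hstep ih =>
    obtain ⟨e, h1, h2⟩ := hstep
    have := ell_step hacyc e
    subst h1 h2
    omega

/-- positions on a longest path ending at v equal levels -/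
lemma ell_pos {m : ℕ} {p : ℕ → V} {v : V} (h : NPath src dst m p) (hv : p m = v)
    (hm : ell src dst v = m) {i : ℕ} (hi : i ≤ m) : ell src dst (p i) = i := by
  have hge : i ≤ ell src dst (p i) :=
    le_ell hacyc ⟨p, fun j (hj : j < i) => h j (by omega), rfl⟩
  obtain ⟨r, hr, hre⟩ := ell_spec (src := src) (dst := dst) (p i)
  obtain ⟨g, hg⟩ : ∃ g, ell src dst (p i) = g := ⟨_, rfl⟩
  rw [hg] at hge hr ⊢
  rw [hg] at hre
  have hends : EndsAt src dst v (g + (m - i)) := by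
    refine ⟨fun j => if j ≤ g then r j else p (i + (j - g)), ?_, ?_⟩
    · intro j hj
      rcases lt_trichotomy j g with h' | h' | h'
      · obtain ⟨e', h1, h2⟩ := hr j h'
        refine ⟨e', ?_, ?_⟩
        · show src e' = if j ≤ g then r j else p (i + (j - g))
          rw [if_pos (by omega : j ≤ g)]; exact h1
        · show dst e' = if j + 1 ≤ g then r (j + 1) else p (i + (j + 1 - g))
          rw [if_pos (by omega : j + 1 ≤ g)]; exact h2
      · have him : i < m := by omega
        obtain ⟨e', h1, h2⟩ := h i him
        refine ⟨e', ?_, ?_⟩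
        · show src e' = if j ≤ g then r j else p (i + (j - g))
          rw [if_pos (le_of_eq h'), h', hre]; exact h1
        · show dst e' = if j + 1 ≤ g then r (j + 1) else p (i + (j + 1 - g))
          rw [if_neg (by omega : ¬ (j + 1 ≤ g)),
            show i + (j + 1 - g) = i + 1 by omega]; exact h2
      · have hlt : i + (j - g) < m := by omega
        obtain ⟨e', h1, h2⟩ := h (i + (j - g)) hlt
        refine ⟨e', ?_, ?_⟩
        · show src e' = if j ≤ g then r j else p (i + (j - g))
          rw [if_neg (by omega : ¬ (j ≤ g))]; exact h1
        · show dst e' = if j + 1 ≤ g then r (j + 1) else p (i + (j + 1 - g))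
          rw [if_neg (by omega : ¬ (j + 1 ≤ g)),
            show i + (j + 1 - g) = i + (j - g) + 1 by omega]; exact h2
    · show (if g + (m - i) ≤ g then r (g + (m - i)) else p (i + (g + (m - i) - g))) = v
      rcases Nat.eq_or_lt_of_le hi with h' | h'
      · rw [if_pos (by omega : g + (m - i) ≤ g), show g + (m - i) = g by omega, hre,
          h', hv]
      · rw [if_neg (by omega : ¬ (g + (m - i) ≤ g)),
          show i + (g + (m - i) - g) = m by omega, hv]
  have := le_ell hacyc hends
  omega

lemma no_in_arc {m : ℕ} {p : ℕ → V} {v : V} (h : NPath src dst m p) (hv : p m = v)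
    (hm : ell src dst v = m) : ∀ e : E, dst e ≠ p 0 := by
  intro e he
  have hends : EndsAt src dst v (m + 1) := by
    refine ⟨fun j => if j = 0 then src e else p (j - 1), ?_, by simp [hv]⟩
    intro j hj
    rcases Nat.eq_zero_or_pos j with h' | h'
    · subst h'
      exact ⟨e, by simp [he]⟩
    · obtain ⟨e', h1, h2⟩ := h (j - 1) (by omega)
      have h3 : j - 1 + 1 = j := by omega
      refine ⟨e', by simp [Nat.pos_iff_ne_zero.mp h', h1], ?_⟩
      simp [h3, h2]
  have := le_ell hacyc hends
  omega

lemma key_lemma (hsource : ∃! s₀ : V, ∀ e : E, dst e ≠ s₀) {s : ℕ}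
    (hspread : ∀ (u v : V) (m m' : ℕ) (p : Fin (m + 1) → V) (q : Fin (m' + 1) → V),
      IsDipath src dst m p → IsDipath src dst m' q →
      p 0 = u → q 0 = u → p (Fin.last m) = v → q (Fin.last m') = v →
      (∀ (a : Fin (m + 1)) (b : Fin (m' + 1)),
        0 < (a : ℕ) → (a : ℕ) < m → 0 < (b : ℕ) → (b : ℕ) < m' → p a ≠ q b) →
      m ≤ m' + s ∧ m' ≤ m + s)
    (e : E) : ell src dst (dst e) ≤ ell src dst (src e) + 1 + s := by
  classical
  obtain ⟨d, hd⟩ : ∃ d, ell src dst (dst e) = d := ⟨_, rfl⟩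
  obtain ⟨l, hl⟩ : ∃ l, ell src dst (src e) = l := ⟨_, rfl⟩
  rw [hd, hl]
  obtain ⟨p, hp, hpv⟩ := ell_spec (src := src) (dst := dst) (dst e)
  rw [hd] at hp hpv
  obtain ⟨qu, hqu, hquu⟩ := ell_spec (src := src) (dst := dst) (src e)
  rw [hl] at hqu hquu
  have hstep := ell_step hacyc e
  rw [hd, hl] at hstep
  obtain ⟨s₀, -, huniq⟩ := hsource
  have hp0 : p 0 = s₀ := huniq _ (no_in_arc hacyc hp hpv hd)
  have hq0 : qu 0 = s₀ := huniq _ (no_in_arc hacyc hqu hquu hl)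
  have hposp : ∀ i ≤ d, ell src dst (p i) = i := fun i hi => ell_pos hacyc hp hpv hd hi
  have hposq : ∀ j ≤ l, ell src dst (qu j) = j := fun j hj => ell_pos hacyc hqu hquu hl hj
  set F : Finset ℕ := (Finset.range d).filter (fun i => ∃ j ≤ l, p i = qu j) with hF
  have h0F : 0 ∈ F := by
    rw [hF, Finset.mem_filter, Finset.mem_range]
    exact ⟨by omega, 0, Nat.zero_le _, by rw [hp0, hq0]⟩
  set i₀ := F.max' ⟨0, h0F⟩ with hi₀
  have hiF : i₀ ∈ F := F.max'_mem _
  rw [hF, Finset.mem_filter, Finset.mem_range] at hiF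
  obtain ⟨hi₀d, j, hjl, hpq⟩ := hiF
  have hij : i₀ = j := by
    have h1 := hposp i₀ (le_of_lt hi₀d)
    have h2 := hposq j hjl
    rw [hpq] at h1
    omega
  have hi₀l : i₀ ≤ l := by omega
  set M := d - i₀ with hM
  set M' := l + 1 - i₀ with hM'
  set P : Fin (M + 1) → V := fun a => p (i₀ + (a : ℕ)) with hP
  set Q : Fin (M' + 1) → V := fun b => if i₀ + (b : ℕ) ≤ l then qu (i₀ + (b : ℕ)) else dst e
    with hQ
  have hPdi : IsDipath src dst M P := by
    intro a
    obtain ⟨e', h1, h2⟩ := hp (i₀ + (a : ℕ)) (by have := a.isLt; omega)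
    refine ⟨e', ?_, ?_⟩
    · show src e' = p (i₀ + ((a.castSucc : Fin (M + 1)) : ℕ))
      rw [Fin.coe_castSucc]; exact h1
    · show dst e' = p (i₀ + ((a.succ : Fin (M + 1)) : ℕ))
      rw [Fin.val_succ, ← Nat.add_assoc]; exact h2
  have hQdi : IsDipath src dst M' Q := by
    intro b
    have hbM : (b : ℕ) < M' := b.isLt
    rcases lt_or_eq_of_le (show i₀ + (b : ℕ) + 1 ≤ l + 1 by omega) with h' | h'
    · obtain ⟨e', h1, h2⟩ := hqu (i₀ + (b : ℕ)) (by omega)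
      refine ⟨e', ?_, ?_⟩
      · show src e' = if i₀ + ((b.castSucc : Fin (M' + 1)) : ℕ) ≤ l then
          qu (i₀ + ((b.castSucc : Fin (M' + 1)) : ℕ)) else dst e
        rw [Fin.coe_castSucc, if_pos (by omega : i₀ + (b : ℕ) ≤ l)]
        exact h1
      · show dst e' = if i₀ + ((b.succ : Fin (M' + 1)) : ℕ) ≤ l then
          qu (i₀ + ((b.succ : Fin (M' + 1)) : ℕ)) else dst e
        rw [Fin.val_succ, if_pos (by omega : i₀ + ((b : ℕ) + 1) ≤ l),
          ← Nat.add_assoc]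
        exact h2
    · refine ⟨e, ?_, ?_⟩
      · show src e = if i₀ + ((b.castSucc : Fin (M' + 1)) : ℕ) ≤ l then
          qu (i₀ + ((b.castSucc : Fin (M' + 1)) : ℕ)) else dst e
        rw [Fin.coe_castSucc, if_pos (by omega : i₀ + (b : ℕ) ≤ l),
          show i₀ + (b : ℕ) = l by omega, hquu]
      · show dst e = if i₀ + ((b.succ : Fin (M' + 1)) : ℕ) ≤ l then
          qu (i₀ + ((b.succ : Fin (M' + 1)) : ℕ)) else dst e
        rw [Fin.val_succ, if_neg (by omega : ¬ (i₀ + ((b : ℕ) + 1) ≤ l))]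
  have hP0 : P 0 = p i₀ := by
    show p (i₀ + ((0 : Fin (M + 1)) : ℕ)) = p i₀
    rw [Fin.val_zero, Nat.add_zero]
  have hQ0 : Q 0 = p i₀ := by
    show (if i₀ + ((0 : Fin (M' + 1)) : ℕ) ≤ l then
        qu (i₀ + ((0 : Fin (M' + 1)) : ℕ)) else dst e) = p i₀
    rw [Fin.val_zero, Nat.add_zero, if_pos hi₀l,
      show qu i₀ = qu j from by rw [hij], ← hpq]
  have hPlast : P (Fin.last M) = dst e := by
    show p (i₀ + ((Fin.last M : Fin (M + 1)) : ℕ)) = dst e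
    rw [Fin.val_last, show i₀ + M = d by omega, hpv]
  have hQlast : Q (Fin.last M') = dst e := by
    show (if i₀ + ((Fin.last M' : Fin (M' + 1)) : ℕ) ≤ l then
        qu (i₀ + ((Fin.last M' : Fin (M' + 1)) : ℕ)) else dst e) = dst e
    rw [Fin.val_last, if_neg (by omega : ¬ (i₀ + M' ≤ l))]
  have hdisj : ∀ (a : Fin (M + 1)) (b : Fin (M' + 1)),
      0 < (a : ℕ) → (a : ℕ) < M → 0 < (b : ℕ) → (b : ℕ) < M' → P a ≠ Q b := by
    intro a b ha0 haM hb0 hbM heq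
    have hbl : i₀ + (b : ℕ) ≤ l := by omega
    have heq' : p (i₀ + (a : ℕ)) = qu (i₀ + (b : ℕ)) := by
      rw [hP] at heq
      simp only at heq
      rw [heq]
      show Q b = _
      rw [hQ]
      simp only
      rw [if_pos hbl]
    have hmem : i₀ + (a : ℕ) ∈ F := by
      rw [hF, Finset.mem_filter, Finset.mem_range]
      exact ⟨by omega, i₀ + (b : ℕ), hbl, heq'⟩
    have := F.le_max' _ hmem
    omega
  have := (hspread (p i₀) (dst e) M M' P Q hPdi hQdi hP0 hQ0 hPlast hQlast hdisj).1
  omega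

end Stmt11Aux
end

/-- let `P` be a finite N-free order with arc diagram the dag
`(V, E, src, dst)`.  If the width of (the transitive closure of) the arc
diagram is at most `k` and its spread is at most `s` (every pair of
interiorly disjoint directed `u`-to-`v` paths has length difference at most
`s`), then the activity satisfies `α(P) ≤ k · (s + 2)`: some linear extension
of `P` has all active sets of size at most `k · (s + 2)`. -/
theorem stmt11 {V E : Type*} [Fintype V] [Fintype E]
    (src dst : E → V)
    (hacyc : ∀ v : V, ¬ Relation.TransGen (vStep src dst) v v)
    (hsource : ∃! s₀ : V, ∀ e : E, dst e ≠ s₀)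
    (hsink : ∃! t₀ : V, ∀ e : E, src e ≠ t₀)
    (k s : ℕ)
    (hwidth : ∀ S : Finset V,
      (∀ u ∈ S, ∀ w ∈ S, u ≠ w → ¬ Relation.TransGen (vStep src dst) u w) →
      S.card ≤ k)
    (hspread : ∀ (u v : V) (m m' : ℕ) (p : Fin (m + 1) → V) (q : Fin (m' + 1) → V),
      IsDipath src dst m p → IsDipath src dst m' q →
      p 0 = u → q 0 = u → p (Fin.last m) = v → q (Fin.last m') = v →
      (∀ (a : Fin (m + 1)) (b : Fin (m' + 1)),
        0 < (a : ℕ) → (a : ℕ) < m → 0 < (b : ℕ) → (b : ℕ) < m' → p a ≠ q b) →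
      m ≤ m' + s ∧ m' ≤ m + s) :
    ∃ L : E ≃ Fin (Fintype.card E),
      (∀ x y : E, lineLT src dst x y → L x < L y) ∧
      ∀ i : ℕ, (activeSet src dst L i).ncard ≤ k * (s + 2) := by
  classical
  set ℓ : V → ℕ := Stmt11Aux.ell src dst with hℓ
  set σ : E ≃ Fin (Fintype.card E) := Fintype.equivFin E with hσ
  set key : E → ℕ ×ₗ Fin (Fintype.card E) := fun e => toLex (ℓ (src e), σ e) with hkey
  have keyinj : Function.Injective key := by
    intro a b hab
    have h2 : (ofLex (key a)).2 = (ofLex (key b)).2 := by rw [hab]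
    exact σ.injective h2
  letI : LinearOrder E := LinearOrder.lift' key keyinj
  have hltiff : ∀ a b : E, a < b ↔ key a < key b := fun a b => Iff.rfl
  set iso : E ≃o Fin (Fintype.card E) := (monoEquivOfFin E rfl).symm with hiso
  have hkeystep : ∀ a b : E, dst a = src b → key a < key b := by
    intro a b hab
    have h1 := Stmt11Aux.ell_step hacyc a
    rw [hab, ← hℓ] at h1
    exact Prod.Lex.lt_iff.mpr (Or.inl (show ℓ (src a) < ℓ (src b) by omega))
  refine ⟨iso.toEquiv, ?_, ?_⟩
  · intro x y h
    have hk : key x < key y := by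
      induction h with
      | single h => exact hkeystep _ _ h
      | tail _ h ih => exact lt_trans ih (hkeystep _ _ h)
    exact iso.lt_iff_lt.mpr ((hltiff x y).mpr hk)
  · intro i
    set A : Finset V := Finset.univ.filter
      (fun v => ∃ a b : E, ((iso.toEquiv a : ℕ) < i ∧ i ≤ (iso.toEquiv b : ℕ)) ∧
        dst a = v ∧ src b = v) with hA
    have hset : activeSet src dst iso.toEquiv i = ↑A := by
      ext v
      simp [activeSet, hA]
    rw [hset, Set.ncard_coe_finset]
    rcases A.eq_empty_or_nonempty with hAe | hAne
    · simp [hAe]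
    obtain ⟨v₀, hv₀A, hv₀min⟩ := A.exists_min_image ℓ hAne
    obtain ⟨a₀, b₀, ⟨hia₀, hib₀⟩, hda₀, hsb₀⟩ := (Finset.mem_filter.mp hv₀A).2
    have hub : ∀ v ∈ A, ℓ v ≤ ℓ v₀ + (s + 1) := by
      intro v hv
      obtain ⟨a, b, ⟨hia, hib⟩, hda, hsb⟩ := (Finset.mem_filter.mp hv).2
      have hab : iso.toEquiv a < iso.toEquiv b₀ := by
        rw [Fin.lt_def]; omega
      have haltb : a < b₀ := iso.lt_iff_lt.mp hab
      have hk : key a < key b₀ := (hltiff _ _).mp haltb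
      have h1 : ℓ (src a) ≤ ℓ (src b₀) := by
        rcases Prod.Lex.lt_iff.mp hk with h | h
        · exact le_of_lt h
        · exact le_of_eq h.1
      have h2 := Stmt11Aux.key_lemma hacyc hsource hspread a
      rw [hda, ← hℓ] at h2
      rw [hsb₀] at h1
      omega
    have hsub : A ⊆ (Finset.range (s + 2)).biUnion
        (fun j => A.filter (fun v => ℓ v = ℓ v₀ + j)) := by
      intro v hv
      rw [Finset.mem_biUnion]
      refine ⟨ℓ v - ℓ v₀, Finset.mem_range.mpr ?_, Finset.mem_filter.mpr ⟨hv, ?_⟩⟩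
      · have := hub v hv; have := hv₀min v hv; omega
      · have := hv₀min v hv; omega
    calc A.card ≤ _ := Finset.card_le_card hsub
      _ ≤ ∑ j ∈ Finset.range (s + 2), (A.filter (fun v => ℓ v = ℓ v₀ + j)).card :=
        Finset.card_biUnion_le
      _ ≤ ∑ _j ∈ Finset.range (s + 2), k := by
        refine Finset.sum_le_sum (fun j _ => hwidth _ ?_)
        intro u hu w hw hne htg
        have hu' := (Finset.mem_filter.mp hu).2
        have hw' := (Finset.mem_filter.mp hw).2
        have := Stmt11Aux.ell_lt_of_transGen hacyc htg
        rw [← hℓ] at this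
        omega
      _ = k * (s + 2) := by
        rw [Finset.sum_const, Finset.card_range, smul_eq_mul, mul_comm]
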